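/- Let 𝔊₃ be the 7-dimensional real Lie algebra with basis (X₁,X₂,X₃,X₄,X₅,X,Y) and nonzero brackets [X₁,X₂]=X₄, [X₁,X₃]=X₅, [X,X₂]=X₂, [X,X₄]=X₄, [Y,X₃]=X₃, [Y,X₅]=X₅. For F ∈ 𝔊₃* with coordinates (α₁,α₂,α₃,α₄,α₅,α,β) in the dual basis, let B_F be the skew-symmetric bilinear form on 𝔊₃ defined by B_F(A,B) = ⟨F,[A,B]⟩. Then the rank of B_F equals 6 if and only if either (α₄ = 0 and α₂α₅ ≠ 0) or (α₄ ≠ 0 and (α₃ ≠ 0 or α₅ ≠ 0)); in particular the maximal possible rank of B_F over all F is 6. -/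

import Mathlib

set_option maxRecDepth 10000
set_option maxHeartbeats 1600000

noncomputable section

/-- Half of the structure constants of the Lie algebra 𝔊₃: `g3half i j` is the
coordinate vector of `[Xᵢ, Xⱼ]` for the ordered pairs `(i,j)` listed in the paper
(indices `0,…,4` are `X₁,…,X₅`, index `5` is `X`, index `6` is `Y`). -/
def g3half (i j : Fin 7) : Fin 7 → ℝ :=
  if i = 0 ∧ j = 1 then Pi.single 3 1      -- [X₁,X₂] = X₄
  else if i = 0 ∧ j = 2 then Pi.single 4 1 -- [X₁,X₃] = X₅
  else if i = 5 ∧ j = 1 then Pi.single 1 1 -- [X,X₂] = X₂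
  else if i = 5 ∧ j = 3 then Pi.single 3 1 -- [X,X₄] = X₄
  else if i = 6 ∧ j = 2 then Pi.single 2 1 -- [Y,X₃] = X₃
  else if i = 6 ∧ j = 4 then Pi.single 4 1 -- [Y,X₅] = X₅
  else 0

/-- The bracket `[Xᵢ, Xⱼ]` (in coordinates) of basis vectors of 𝔊₃. -/
def g3br (i j : Fin 7) : Fin 7 → ℝ := g3half i j - g3half j i

/-- The Gram matrix of the bilinear form `B_F(A,B) = ⟨F,[A,B]⟩` in the given basis,
where `α` is the coordinate vector of `F` in the dual basis. -/
def gramG3 (α : Fin 7 → ℝ) : Matrix (Fin 7) (Fin 7) ℝ :=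
  Matrix.of fun i j => ∑ k, α k * g3br i j k

open Matrix

/-- The Gram matrix, explicitly. -/
lemma gram_explicit (α : Fin 7 → ℝ) :
    gramG3 α = Matrix.of ![
      ![0, α 3, α 4, 0, 0, 0, 0],
      ![-α 3, 0, 0, 0, 0, -α 1, 0],
      ![-α 4, 0, 0, 0, 0, 0, -α 2],
      ![0, 0, 0, 0, 0, -α 3, 0],
      ![0, 0, 0, 0, 0, 0, -α 4],
      ![0, α 1, 0, α 3, 0, 0, 0],
      ![0, 0, α 2, 0, α 4, 0, 0]] := by
  ext i j
  fin_cases i <;> fin_cases j <;>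
    (simp [gramG3, g3br, g3half, Fin.sum_univ_seven, Pi.single_apply]; try rfl)

/-- The rank of the Gram matrix never exceeds `6`. -/
lemma rank_le_six (α : Fin 7 → ℝ) : (gramG3 α).rank ≤ 6 := by
  have hskew : (gramG3 α)ᵀ = -(gramG3 α) := by
    ext i j
    show (∑ k, α k * g3br j i k) = -∑ k, α k * g3br i j k
    rw [← Finset.sum_neg_distrib]
    exact Finset.sum_congr rfl fun k _ => by simp only [g3br, Pi.sub_apply]; ring
  have hdet : (gramG3 α).det = 0 := by
    have h2 : (-(gramG3 α)).det = -(gramG3 α).det := by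
      rw [Matrix.det_neg, Fintype.card_fin]; norm_num
    have h1 : (gramG3 α).det = (-(gramG3 α)).det := by
      rw [← hskew, Matrix.det_transpose]
    rw [h2] at h1
    linarith
  obtain ⟨v, hv, hMv⟩ := Matrix.exists_mulVec_eq_zero_iff.mpr hdet
  have hrn := LinearMap.finrank_range_add_finrank_ker (gramG3 α).mulVecLin
  have hker : 0 < Module.finrank ℝ (LinearMap.ker (gramG3 α).mulVecLin) := by
    rw [Module.finrank_pos_iff_exists_ne_zero]
    refine ⟨⟨v, by simpa [Matrix.mulVecLin_apply] using hMv⟩, ?_⟩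
    simp only [ne_eq, Submodule.mk_eq_zero]
    exact hv
  have h7 : Module.finrank ℝ (Fin 7 → ℝ) = 7 := by simp
  rw [h7] at hrn
  have : (gramG3 α).rank = Module.finrank ℝ (LinearMap.range (gramG3 α).mulVecLin) := rfl
  omega

/-- If a 6×6 submatrix is nonsingular, the rank is at least 6. -/
lemma six_le_rank (M : Matrix (Fin 7) (Fin 7) ℝ) (f : Fin 6 → Fin 7)
    (h : (M.submatrix f f).det ≠ 0) : 6 ≤ M.rank := by
  set E : Matrix (Fin 6) (Fin 7) ℝ := (1 : Matrix (Fin 7) (Fin 7) ℝ).submatrix f id with hE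
  have h1 : E * M = M.submatrix f id := by
    ext i j
    simp [hE, Matrix.mul_apply, Matrix.one_apply, Finset.sum_ite_eq]
  have h2 : (M.submatrix f id) * Eᵀ = M.submatrix f f := by
    ext i j
    simp [hE, Matrix.mul_apply, Matrix.one_apply, mul_ite, Finset.sum_ite_eq]
  have hru : (M.submatrix f f).rank = 6 := by
    have := Matrix.rank_of_isUnit (M.submatrix f f)
      ((Matrix.isUnit_iff_isUnit_det _).mpr (isUnit_iff_ne_zero.mpr h))
    simpa using this
  calc (6 : ℕ) = (M.submatrix f f).rank := hru.symm
    _ = ((E * M) * Eᵀ).rank := by rw [h1, h2]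
    _ ≤ (E * M).rank := Matrix.rank_mul_le_left _ _
    _ ≤ M.rank := Matrix.rank_mul_le_right _ _

/-- If all rows outside the range of an injective `g : Fin 4 → Fin 7` vanish,
the rank is at most 4. -/
lemma rank_le_four (M : Matrix (Fin 7) (Fin 7) ℝ) (g : Fin 4 → Fin 7)
    (hg : Function.Injective g)
    (h0 : ∀ i, (∀ k, g k ≠ i) → ∀ j, M i j = 0) : M.rank ≤ 4 := by
  have hfac : M = (Matrix.of fun i k => if i = g k then (1 : ℝ) else 0) * M.submatrix g id := by
    ext i j
    rw [Matrix.mul_apply]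
    by_cases hex : ∃ k, g k = i
    · obtain ⟨k0, hk0⟩ := hex
      rw [Finset.sum_eq_single k0]
      · subst hk0; simp
      · intro b _ hb
        have hne : i ≠ g b := by
          intro hh
          exact hb (hg (hk0.trans hh)).symm
        simp [Matrix.of_apply, hne]
      · intro hk; exact absurd (Finset.mem_univ k0) hk
    · push_neg at hex
      rw [h0 i (fun k => hex k) j]
      symm
      apply Finset.sum_eq_zero
      intro k _
      simp [Matrix.of_apply, Ne.symm (hex k)]
  calc M.rank = ((Matrix.of fun i k => if i = g k then (1 : ℝ) else 0) *
        M.submatrix g id).rank := by rw [← hfac]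
    _ ≤ (M.submatrix g id).rank := Matrix.rank_mul_le_right _ _
    _ ≤ 4 := by simpa using Matrix.rank_le_card_height (M.submatrix g id)

/-- For `F ∈ 𝔊₃*` with coordinates `(α₁,…,α₅,α,β)`, the rank of `B_F` is `6`
iff either (`α₄ = 0` and `α₂α₅ ≠ 0`) or (`α₄ ≠ 0` and (`α₃ ≠ 0` or `α₅ ≠ 0`));
in particular the maximal rank is `6`. -/
theorem rank_BF_G3 :
    (∀ α : Fin 7 → ℝ, (gramG3 α).rank ≤ 6) ∧
    (∀ α : Fin 7 → ℝ,
      (gramG3 α).rank = 6 ↔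
        ((α 3 = 0 ∧ α 1 * α 4 ≠ 0) ∨ (α 3 ≠ 0 ∧ (α 2 ≠ 0 ∨ α 4 ≠ 0)))) := by
  refine ⟨rank_le_six, fun α => ⟨fun h6 => ?_, fun hc => ?_⟩⟩
  · -- forward direction, by contradiction
    by_contra hc
    push_neg at hc
    by_cases ha3 : α 3 = 0
    · have h14 : α 1 * α 4 = 0 := hc.1 ha3
      rcases mul_eq_zero.mp h14 with ha1 | ha4
      · have : (gramG3 α).rank ≤ 4 := by
          apply rank_le_four _ ![0, 2, 4, 6] (by decide)
          intro i hi j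
          fin_cases i
          · exact absurd rfl (hi 0)
          · fin_cases j <;> (simp [gram_explicit, ha3, ha1]; try rfl)
          · exact absurd rfl (hi 1)
          · fin_cases j <;> (simp [gram_explicit, ha3, ha1]; try rfl)
          · exact absurd rfl (hi 2)
          · fin_cases j <;> (simp [gram_explicit, ha3, ha1]; try rfl)
          · exact absurd rfl (hi 3)
        omega
      · have : (gramG3 α).rank ≤ 4 := by
          apply rank_le_four _ ![1, 2, 5, 6] (by decide)
          intro i hi j
          fin_cases i
          · fin_cases j <;> (simp [gram_explicit, ha3, ha4]; try rfl)
          · exact absurd rfl (hi 0)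
          · exact absurd rfl (hi 1)
          · fin_cases j <;> (simp [gram_explicit, ha3, ha4]; try rfl)
          · fin_cases j <;> (simp [gram_explicit, ha3, ha4]; try rfl)
          · exact absurd rfl (hi 2)
          · exact absurd rfl (hi 3)
        omega
    · obtain ⟨ha2, ha4⟩ := hc.2 ha3
      have : (gramG3 α).rank ≤ 4 := by
        apply rank_le_four _ ![0, 1, 3, 5] (by decide)
        intro i hi j
        fin_cases i
        · exact absurd rfl (hi 0)
        · exact absurd rfl (hi 1)
        · fin_cases j <;> (simp [gram_explicit, ha2, ha4]; try rfl)
        · exact absurd rfl (hi 2)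
        · fin_cases j <;> (simp [gram_explicit, ha2, ha4]; try rfl)
        · exact absurd rfl (hi 3)
        · fin_cases j <;> (simp [gram_explicit, ha2, ha4]; try rfl)
      omega
  · -- reverse direction
    refine le_antisymm (rank_le_six α) ?_
    rcases hc with ⟨ha3, h14⟩ | ⟨ha3, ha2 | ha4⟩
    · have ha1 : α 1 ≠ 0 := left_ne_zero_of_mul h14
      have ha4 : α 4 ≠ 0 := right_ne_zero_of_mul h14
      apply six_le_rank _ ![0, 1, 2, 4, 5, 6]
      have hsub : (gramG3 α).submatrix ![0, 1, 2, 4, 5, 6] ![0, 1, 2, 4, 5, 6] =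
          !![0, α 3, α 4, 0, 0, 0;
             -α 3, 0, 0, 0, -α 1, 0;
             -α 4, 0, 0, 0, 0, -α 2;
             0, 0, 0, 0, 0, -α 4;
             0, α 1, 0, 0, 0, 0;
             0, 0, α 2, α 4, 0, 0] := by
        rw [gram_explicit]
        ext i j
        fin_cases i <;> fin_cases j <;> rfl
      rw [hsub]
      have hd : (!![0, α 3, α 4, 0, 0, 0;
             -α 3, 0, 0, 0, -α 1, 0;
             -α 4, 0, 0, 0, 0, -α 2;
             0, 0, 0, 0, 0, -α 4;
             0, α 1, 0, 0, 0, 0;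
             0, 0, α 2, α 4, 0, 0] : Matrix (Fin 6) (Fin 6) ℝ).det
          = α 1 ^ 2 * α 4 ^ 4 := by
        simp [Matrix.det_succ_row_zero, Fin.sum_univ_succ, Fin.succAbove]
        ring
      rw [hd]
      exact mul_ne_zero (pow_ne_zero _ ha1) (pow_ne_zero _ ha4)
    · apply six_le_rank _ ![0, 1, 2, 3, 5, 6]
      have hsub : (gramG3 α).submatrix ![0, 1, 2, 3, 5, 6] ![0, 1, 2, 3, 5, 6] =
          !![0, α 3, α 4, 0, 0, 0;
             -α 3, 0, 0, 0, -α 1, 0;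
             -α 4, 0, 0, 0, 0, -α 2;
             0, 0, 0, 0, -α 3, 0;
             0, α 1, 0, α 3, 0, 0;
             0, 0, α 2, 0, 0, 0] := by
        rw [gram_explicit]
        ext i j
        fin_cases i <;> fin_cases j <;> rfl
      rw [hsub]
      have hd : (!![0, α 3, α 4, 0, 0, 0;
             -α 3, 0, 0, 0, -α 1, 0;
             -α 4, 0, 0, 0, 0, -α 2;
             0, 0, 0, 0, -α 3, 0;
             0, α 1, 0, α 3, 0, 0;
             0, 0, α 2, 0, 0, 0] : Matrix (Fin 6) (Fin 6) ℝ).det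
          = α 2 ^ 2 * α 3 ^ 4 := by
        simp [Matrix.det_succ_row_zero, Fin.sum_univ_succ, Fin.succAbove]
        ring
      rw [hd]
      exact mul_ne_zero (pow_ne_zero _ ha2) (pow_ne_zero _ ha3)
    · apply six_le_rank _ ![0, 1, 3, 4, 5, 6]
      have hsub : (gramG3 α).submatrix ![0, 1, 3, 4, 5, 6] ![0, 1, 3, 4, 5, 6] =
          !![0, α 3, 0, 0, 0, 0;
             -α 3, 0, 0, 0, -α 1, 0;
             0, 0, 0, 0, -α 3, 0;
             0, 0, 0, 0, 0, -α 4;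
             0, α 1, α 3, 0, 0, 0;
             0, 0, 0, α 4, 0, 0] := by
        rw [gram_explicit]
        ext i j
        fin_cases i <;> fin_cases j <;> rfl
      rw [hsub]
      have hd : (!![0, α 3, 0, 0, 0, 0;
             -α 3, 0, 0, 0, -α 1, 0;
             0, 0, 0, 0, -α 3, 0;
             0, 0, 0, 0, 0, -α 4;
             0, α 1, α 3, 0, 0, 0;
             0, 0, 0, α 4, 0, 0] : Matrix (Fin 6) (Fin 6) ℝ).det
          = α 3 ^ 4 * α 4 ^ 2 := by
        simp [Matrix.det_succ_row_zero, Fin.sum_univ_succ, Fin.succAbove]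
        ring
      rw [hd]
      exact mul_ne_zero (pow_ne_zero _ ha3) (pow_ne_zero _ ha4)

end
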